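/- Every Lie algebra is a terminal algebra, i.e., its bracket multiplication P satisfies [[[P,a],P],P] = 0 for all a. -/
import Mathlib

def kbr1 {V : Type*} [AddCommGroup V] (A : V → V) (B : V → V → V) : V → V → V :=
  fun x y => A (B x y) - B (A x) y - B x (A y)

def kbr2 {V : Type*} [AddCommGroup V] (B C : V → V → V) : V → V → V → V :=
  fun x y z => B (C x y) z + B x (C y z) + B y (C x z)
    - C (B x y) z - C x (B y z) - C y (B x z)

def IsTerminal {V : Type*} [AddCommGroup V] (P : V → V → V) : Prop :=
  ∀ a x y z, kbr2 (kbr1 (fun w => P a w) P) P x y z = 0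

/-- Every Lie algebra is terminal: its bracket multiplication satisfies the terminal identity. -/
theorem stmt3 {L : Type*} [LieRing L] [LieAlgebra ℂ L] :
    IsTerminal (fun x y : L => ⁅x, y⁆) := by
  intro a x y z
  simp only [kbr1, kbr2, lie_lie, lie_sub, sub_lie, lie_add, add_lie]
  abel
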